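/- arXiv:1603.05097 — 4 statements merged into one kernel-verified Lean document; each statement's English description precedes it below -/
import Mathlib

section
/- Let G be a connected undirected graph on N vertices with edge set E, incidence matrix D(G) and Laplacian L(G) = D(G) D(G)^T, whose second smallest eigenvalue λ₂(G) is positive. Let v_max > 0 and let K₂ = 2 √N (N−1) ‖D(G)^T‖ / λ₂(G)², where ‖·‖ denotes the operator norm. Suppose x_i : [0,∞) → ℝⁿ, i = 1,…,N, are differentiable and satisfy the coupled dynamics ẋ_i(t) = −∑_{j ∈ N(i)} (x_i(t) − x_j(t)) + v_i(t), where N(i) is the set of neighbors of vertex i and the inputs satisfy ‖v_i(t)‖ ≤ v_max for all i and all t ≥ 0. Let x̃(t) ∈ ℝ^{|E|n} be the stacked vector of edge differences x_i(t) − x_j(t) over the edges {i,j} ∈ E. Then for every constant R̄ > K₂ v_max and every initial condition, there exists a time T > 0 such that ‖x̃(t)‖ ≤ R̄ for all t ≥ T. -/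
open scoped BigOperators
open Matrix

/-- The oriented incidence matrix of a graph whose `m` edges are enumerated by
the endpoint maps `a b : Fin m → Fin N` (edge `e` goes from `a e` to `b e`). -/
noncomputable def incidenceMat {N m : ℕ} (a b : Fin m → Fin N) :
    Matrix (Fin N) (Fin m) ℝ :=
  Matrix.of fun i e => if i = a e then 1 else if i = b e then -1 else 0

/-- The operator norm (induced by the Euclidean norms) of a real matrix. -/
noncomputable def matOpNorm {N m : ℕ} (A : Matrix (Fin N) (Fin m) ℝ) : ℝ :=
  ‖LinearMap.toContinuousLinearMap (Matrix.toEuclideanLin A)‖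

lemma incidenceMat_apply {N m : ℕ} (a b : Fin m → Fin N) (i : Fin N) (e : Fin m)
    (hne : a e ≠ b e) :
    incidenceMat a b i e = (if i = a e then (1:ℝ) else 0) - (if i = b e then (1:ℝ) else 0) := by
  simp only [incidenceMat, Matrix.of_apply]
  split_ifs with h1 h2 <;> simp_all

lemma transpose_mulVec {N m : ℕ} (a b : Fin m → Fin N) (hne : ∀ e, a e ≠ b e)
    (y : Fin N → ℝ) (e : Fin m) :
    ((incidenceMat a b)ᵀ.mulVec y) e = y (a e) - y (b e) := by
  simp only [Matrix.mulVec, dotProduct, Matrix.transpose_apply]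
  rw [Finset.sum_congr rfl (fun i _ => by rw [incidenceMat_apply a b i e (hne e), sub_mul])]
  simp [Finset.sum_sub_distrib, Finset.sum_ite_eq']

lemma quad_form_eq {N m : ℕ} (a b : Fin m → Fin N) (hne : ∀ e, a e ≠ b e)
    (y : Fin N → ℝ) :
    ∑ i, y i * ((incidenceMat a b * (incidenceMat a b)ᵀ).mulVec y i)
      = ∑ e, (y (a e) - y (b e)) ^ 2 := by
  have h1 : ∀ i, ((incidenceMat a b * (incidenceMat a b)ᵀ).mulVec y) i
      = ∑ e, incidenceMat a b i e * ((incidenceMat a b)ᵀ.mulVec y e) := by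
    intro i
    simp only [Matrix.mulVec, dotProduct, Matrix.mul_apply, Finset.sum_mul, mul_assoc,
      Finset.mul_sum]
    rw [Finset.sum_comm]
  calc ∑ i, y i * ((incidenceMat a b * (incidenceMat a b)ᵀ).mulVec y i)
      = ∑ e, (∑ i, y i * incidenceMat a b i e) * ((incidenceMat a b)ᵀ.mulVec y e) := by
        simp only [h1, Finset.mul_sum]
        rw [Finset.sum_comm]
        simp [Finset.sum_mul, mul_assoc]
    _ = ∑ e, (y (a e) - y (b e)) ^ 2 := by
        refine Finset.sum_congr rfl fun e _ => ?_
        have h2 : (∑ i, y i * incidenceMat a b i e) = y (a e) - y (b e) := by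
          rw [Finset.sum_congr rfl (fun i _ => by rw [incidenceMat_apply a b i e (hne e), mul_sub])]
          simp [Finset.sum_sub_distrib, Finset.sum_ite_eq', mul_ite]
        rw [transpose_mulVec a b hne, h2, sq]

lemma sq_sum_le {N m : ℕ} (a b : Fin m → Fin N) (hne : ∀ e, a e ≠ b e)
    (y : Fin N → ℝ) :
    ∑ e, (y (a e) - y (b e)) ^ 2 ≤ (matOpNorm (incidenceMat a b)ᵀ)^2 * ∑ i, (y i)^2 := by
  set A := (incidenceMat a b)ᵀ
  set L := LinearMap.toContinuousLinearMap (Matrix.toEuclideanLin A)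
  set yE : EuclideanSpace ℝ (Fin N) := (WithLp.equiv 2 (Fin N → ℝ)).symm y
  have hz : ∀ e, (L yE) e = y (a e) - y (b e) := by
    intro e
    have : L yE = (WithLp.equiv 2 (Fin m → ℝ)).symm (A.mulVec y) := by
      simp only [L, LinearMap.coe_toContinuousLinearMap', Matrix.toEuclideanLin_apply, yE]
      congr 1
    rw [this]
    exact transpose_mulVec a b hne y e
  have hnorm : ‖L yE‖ ≤ matOpNorm A * ‖yE‖ := L.le_opNorm yE
  have h1 : ‖L yE‖^2 = ∑ e, (y (a e) - y (b e))^2 := by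
    rw [EuclideanSpace.norm_eq, Real.sq_sqrt (by positivity)]
    exact Finset.sum_congr rfl fun e _ => by rw [hz e]; rw [Real.norm_eq_abs, sq_abs]
  have h2 : ‖yE‖^2 = ∑ i, (y i)^2 := by
    rw [EuclideanSpace.norm_eq, Real.sq_sqrt (by positivity)]
    exact Finset.sum_congr rfl fun i _ => by rw [Real.norm_eq_abs, sq_abs]; rfl
  calc ∑ e, (y (a e) - y (b e))^2 = ‖L yE‖^2 := h1.symm
    _ ≤ (matOpNorm A * ‖yE‖)^2 := by
        apply sq_le_sq' _ hnorm
        nlinarith [norm_nonneg (L yE), norm_nonneg yE]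
    _ = (matOpNorm A)^2 * ∑ i, (y i)^2 := by rw [mul_pow, h2]

section Comb
variable {N m : ℕ} {M : Type*} [AddCommMonoid M]
variable (G : SimpleGraph (Fin N)) [DecidableRel G.Adj]

lemma adj_swap (F : Fin N → Fin N → M) :
    ∑ i, ∑ j ∈ G.neighborFinset i, F i j = ∑ i, ∑ j ∈ G.neighborFinset i, F j i := by
  simp only [SimpleGraph.neighborFinset_eq_filter, Finset.sum_filter]
  rw [Finset.sum_comm]
  refine Finset.sum_congr rfl fun i _ => Finset.sum_congr rfl fun j _ => ?_
  simp [G.adj_comm]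

variable (a b : Fin m → Fin N)
variable (hab : ∀ e, G.Adj (a e) (b e))
variable (huniq : ∀ u v : Fin N, G.Adj u v →
      ∃! e : Fin m, (a e = u ∧ b e = v) ∨ (a e = v ∧ b e = u))

include hab huniq in
lemma pair_sum (F : Fin N → Fin N → ℝ) (hsymm : ∀ i j, F i j = F j i) :
    ∑ i, ∑ j ∈ G.neighborFinset i, F i j = 2 * ∑ e, F (a e) (b e) := by
  classical
  have hne : ∀ e, a e ≠ b e := fun e => (hab e).ne
  have key : ∑ p ∈ (Finset.univ ×ˢ Finset.univ).filter
        (fun p : Fin N × Fin N => G.Adj p.1 p.2), F p.1 p.2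
      = ∑ q : Fin m × Bool, F (a q.1) (b q.1) := by
    refine Finset.sum_bij' (fun p hp => ((huniq p.1 p.2 (by simpa using hp)).choose,
        decide (a (huniq p.1 p.2 (by simpa using hp)).choose = p.1)))
      (fun q _ => if q.2 then (a q.1, b q.1) else (b q.1, a q.1)) ?_ ?_ ?_ ?_ ?_
    · intro p hp; exact Finset.mem_univ _
    · intro q _
      simp only [Finset.mem_filter, Finset.mem_product, Finset.mem_univ, true_and]
      by_cases h : q.2 <;> simp [h, hab q.1, (hab q.1).symm]
    · intro p hp
      have hadj : G.Adj p.1 p.2 := by simpa using hp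
      obtain h | h := (huniq p.1 p.2 hadj).choose_spec.1
      · simp [h.1, h.2, Prod.ext_iff]
      · have hne' : a (huniq p.1 p.2 hadj).choose ≠ p.1 := fun hh =>
          hadj.ne (hh.symm.trans h.1)
        simp [hne', h.1, h.2, Prod.ext_iff, hadj.ne']
    · intro q _
      set p : Fin N × Fin N := if q.2 then (a q.1, b q.1) else (b q.1, a q.1) with hp
      have hadj : G.Adj p.1 p.2 := by by_cases h : q.2 <;> simp [hp, h, hab q.1, (hab q.1).symm]
      have hq1 : (a q.1 = p.1 ∧ b q.1 = p.2) ∨ (a q.1 = p.2 ∧ b q.1 = p.1) := by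
        by_cases h : q.2 <;> simp [hp, h]
      have hc : (huniq p.1 p.2 hadj).choose = q.1 :=
        ((huniq p.1 p.2 hadj).choose_spec.2 q.1 hq1).symm
      show ((huniq p.1 p.2 hadj).choose, decide (a ((huniq p.1 p.2 hadj).choose) = p.1)) = q
      rw [Prod.ext_iff]
      refine ⟨hc, ?_⟩
      rw [hc]
      by_cases h : q.2
      · simp [hp, h]
      · simp [hp, h, hne q.1]
    · intro p hp
      have hadj : G.Adj p.1 p.2 := by simpa using hp
      obtain h | h := (huniq p.1 p.2 hadj).choose_spec.1
      · rw [h.1, h.2]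
      · rw [h.1, h.2, hsymm]
  have lhs : ∑ i, ∑ j ∈ G.neighborFinset i, F i j
      = ∑ p ∈ (Finset.univ ×ˢ Finset.univ).filter
        (fun p : Fin N × Fin N => G.Adj p.1 p.2), F p.1 p.2 := by
    rw [Finset.sum_filter, Finset.sum_product]
    refine Finset.sum_congr rfl fun i _ => ?_
    simp [SimpleGraph.neighborFinset_eq_filter, Finset.sum_filter]
  rw [lhs, key, Fintype.sum_prod_type, two_mul, ← Finset.sum_add_distrib]
  simp [two_mul]
end Comb

section More
variable {N m n : ℕ}
variable (G : SimpleGraph (Fin N)) [DecidableRel G.Adj]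
variable (a b : Fin m → Fin N)
variable (hab : ∀ e, G.Adj (a e) (b e))
variable (huniq : ∀ u v : Fin N, G.Adj u v →
      ∃! e : Fin m, (a e = u ∧ b e = v) ∨ (a e = v ∧ b e = u))

open scoped RealInnerProductSpace

lemma zero_sum {M : Type*} [AddCommGroup M] [Module ℝ M] (u : Fin N → M) :
    ∑ i, ∑ j ∈ G.neighborFinset i, (u i - u j) = 0 := by
  have h := adj_swap G (fun i j => u i - u j)
  set S := ∑ i, ∑ j ∈ G.neighborFinset i, (u i - u j) with hS
  have h2 : S + S = 0 := by
    nth_rewrite 2 [h]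
    rw [hS, ← Finset.sum_add_distrib]
    refine Finset.sum_eq_zero fun i _ => ?_
    rw [← Finset.sum_add_distrib]
    exact Finset.sum_eq_zero fun j _ => by abel
  have h3 : (2:ℝ) • S = 0 := by rw [two_smul]; exact h2
  exact (smul_eq_zero.mp h3).resolve_left (by norm_num)

include hab huniq in
lemma neighbor_inner_sum (w : Fin N → EuclideanSpace ℝ (Fin n)) :
    ∑ i, ⟪∑ j ∈ G.neighborFinset i, (w i - w j), w i⟫
      = ∑ e, ‖w (a e) - w (b e)‖ ^ 2 := by
  have key : ∀ p q : EuclideanSpace ℝ (Fin n), ⟪p - q, p⟫ + ⟪q - p, q⟫ = ‖p - q‖^2 := by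
    intro p q
    rw [← neg_sub p q, inner_neg_left, ← real_inner_self_eq_norm_sq, inner_sub_right]
    ring
  have h1 : ∑ i, ⟪∑ j ∈ G.neighborFinset i, (w i - w j), w i⟫
      = ∑ i, ∑ j ∈ G.neighborFinset i, ⟪w i - w j, w i⟫ :=
    Finset.sum_congr rfl fun i _ => by rw [sum_inner]
  set S := ∑ i, ∑ j ∈ G.neighborFinset i, ⟪w i - w j, w i⟫ with hS
  have h2 : S = ∑ i, ∑ j ∈ G.neighborFinset i, ⟪w j - w i, w j⟫ :=
    adj_swap G (fun i j => ⟪w i - w j, w i⟫)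
  have h3 : S + S = ∑ i, ∑ j ∈ G.neighborFinset i, ‖w i - w j‖^2 := by
    nth_rewrite 2 [h2]
    rw [← Finset.sum_add_distrib]
    refine Finset.sum_congr rfl fun i _ => ?_
    rw [← Finset.sum_add_distrib]
    exact Finset.sum_congr rfl fun j _ => key (w i) (w j)
  have h4 : ∑ i, ∑ j ∈ G.neighborFinset i, ‖w i - w j‖^2
      = 2 * ∑ e, ‖w (a e) - w (b e)‖^2 :=
    pair_sum G a b hab huniq _ (fun i j => by rw [norm_sub_rev])
  rw [h1]
  have := h3.trans h4
  linarith

include hab huniq in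
lemma card_edges_at (u : Fin N) :
    ((Finset.univ.filter (fun e => a e = u ∨ b e = u)).card : ℝ) ≤ (N : ℝ) - 1 := by
  classical
  have hinj : ∀ e ∈ Finset.univ.filter (fun e => a e = u ∨ b e = u),
      (if a e = u then b e else a e) ∈ G.neighborFinset u := by
    intro e he
    rw [SimpleGraph.mem_neighborFinset]
    rcases Finset.mem_filter.mp he with ⟨-, h | h⟩
    · simp only [h, if_pos rfl]; exact h ▸ hab e
    · have hne : a e ≠ u := fun hh => (hab e).ne (hh.trans h.symm)
      simp only [if_neg hne]
      exact (h ▸ hab e).symm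
  have hcard : (Finset.univ.filter (fun e => a e = u ∨ b e = u)).card
      ≤ (G.neighborFinset u).card := by
    apply Finset.card_le_card_of_injOn _ hinj
    intro e he e' he' hee
    simp only [Finset.coe_filter, Set.mem_setOf_eq, Finset.mem_univ, true_and] at he he'
    have hp : ∀ f : Fin m, (a f = u ∨ b f = u) →
        (a f = u ∧ b f = (if a f = u then b f else a f)) ∨
        (a f = (if a f = u then b f else a f) ∧ b f = u) := by
      intro f hf
      rcases hf with hf' | hf'
      · exact Or.inl ⟨hf', by rw [if_pos hf']⟩
      · have : a f ≠ u := fun hh => (hab f).ne (hh.trans hf'.symm)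
        exact Or.inr ⟨by rw [if_neg this], hf'⟩
    have hee' : (if a e = u then b e else a e) = (if a e' = u then b e' else a e') := hee
    have hadj : G.Adj u (if a e = u then b e else a e) :=
      (SimpleGraph.mem_neighborFinset _ _ _).mp
        (hinj e (Finset.mem_filter.mpr ⟨Finset.mem_univ _, he⟩))
    have h2' := hp e' he'
    rw [← hee'] at h2'
    exact (huniq u _ hadj).unique (hp e he) h2'
  have hdeg : (G.neighborFinset u).card < N := by
    have := G.degree_lt_card_verts u
    rw [← SimpleGraph.card_neighborFinset_eq_degree] at this
    simpa using this
  have : (Finset.univ.filter (fun e => a e = u ∨ b e = u)).card + 1 ≤ N :=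
    Nat.succ_le_of_lt (lt_of_le_of_lt hcard hdeg)
  have := Nat.cast_le (α := ℝ) |>.mpr this
  push_cast at this
  linarith
end More

section Lam2
variable {N m : ℕ}
variable (G : SimpleGraph (Fin N)) [DecidableRel G.Adj]
variable (a b : Fin m → Fin N)
variable (hab : ∀ e, G.Adj (a e) (b e))
variable (huniq : ∀ u v : Fin N, G.Adj u v →
      ∃! e : Fin m, (a e = u ∧ b e = v) ∨ (a e = v ∧ b e = u))

include hab huniq in
lemma lam2_le (lam2 : ℝ)
    (hvar : ∀ y : Fin N → ℝ, (∑ i, y i) = 0 →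
      lam2 * (∑ i, (y i) ^ 2) ≤
        ∑ i, y i * ((incidenceMat a b * (incidenceMat a b)ᵀ).mulVec y i))
    (e0 : Fin m) :
    lam2 ≤ 2 * ((N : ℝ) - 1) := by
  classical
  set u := a e0
  set w := b e0
  have huw : u ≠ w := (hab e0).ne
  set y : Fin N → ℝ := fun i => (if i = u then 1 else 0) - (if i = w then 1 else 0) with hy
  have hsum : (∑ i, y i) = 0 := by
    simp [hy, Finset.sum_sub_distrib, Finset.sum_ite_eq']
  have hsq : ∑ i, (y i)^2 = 2 := by
    have : ∀ i, (y i)^2 = (if i = u then 1 else 0) + (if i = w then 1 else 0) := by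
      intro i
      simp only [hy]
      split_ifs with h1 h2 <;> simp_all <;> ring
    rw [Finset.sum_congr rfl fun i _ => this i]
    simp [Finset.sum_add_distrib, Finset.sum_ite_eq']
    norm_num
  have hne : ∀ e, a e ≠ b e := fun e => (hab e).ne
  have hq := hvar y hsum
  rw [quad_form_eq a b hne, hsq] at hq
  -- bound the RHS
  have hbd : ∀ e, (y (a e) - y (b e))^2 ≤
      2 * (((if a e = u then (1:ℝ) else 0) + (if a e = w then 1 else 0))
        + ((if b e = u then 1 else 0) + (if b e = w then 1 else 0))) := by
    intro e
    have h1 : (y (a e))^2 ≤ (if a e = u then (1:ℝ) else 0) + (if a e = w then 1 else 0) := by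
      simp only [hy]; split_ifs with h1 h2 <;> simp_all <;> norm_num
    have h2 : (y (b e))^2 ≤ (if b e = u then (1:ℝ) else 0) + (if b e = w then 1 else 0) := by
      simp only [hy]; split_ifs with h1 h2 <;> simp_all <;> norm_num
    nlinarith [sq_nonneg (y (a e) + y (b e))]
  have hcount : ∀ z : Fin N, (∑ e, ((if a e = u then (1:ℝ) else 0)))
      = ((Finset.univ.filter (fun e => a e = u)).card : ℝ) := by
    intro z; simp [Finset.sum_boole]
  have hsplit : ∀ z : Fin N,
      ∑ e, ((if a e = z then (1:ℝ) else 0) + (if b e = z then 1 else 0))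
      ≤ (N : ℝ) - 1 := by
    intro z
    have hdisj : ∀ e, (if a e = z then (1:ℝ) else 0) + (if b e = z then 1 else 0)
        = if (a e = z ∨ b e = z) then 1 else 0 := by
      intro e
      by_cases h1 : a e = z <;> by_cases h2 : b e = z <;> simp_all
      exact absurd (h1.trans h2.symm) (hne e)
    rw [Finset.sum_congr rfl fun e _ => hdisj e, Finset.sum_boole]
    simpa using card_edges_at G a b hab huniq z
  have hRHS : ∑ e, (y (a e) - y (b e))^2 ≤ 4 * ((N:ℝ) - 1) := by
    calc ∑ e, (y (a e) - y (b e))^2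
        ≤ ∑ e, 2 * (((if a e = u then (1:ℝ) else 0) + (if a e = w then 1 else 0))
          + ((if b e = u then 1 else 0) + (if b e = w then 1 else 0))) :=
          Finset.sum_le_sum fun e _ => hbd e
      _ = 2 * ((∑ e, ((if a e = u then (1:ℝ) else 0) + (if b e = u then 1 else 0)))
          + (∑ e, ((if a e = w then (1:ℝ) else 0) + (if b e = w then 1 else 0)))) := by
          rw [← Finset.mul_sum, ← Finset.sum_add_distrib]
          congr 1
          exact Finset.sum_congr rfl fun e _ => by ring
      _ ≤ 2 * (((N:ℝ) - 1) + ((N:ℝ) - 1)) := by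
          have := hsplit u
          have := hsplit w
          nlinarith
      _ = 4 * ((N:ℝ) - 1) := by ring
  linarith
end Lam2

open scoped RealInnerProductSpace

section Analysis
-- standalone analysis lemma: scalar comparison
lemma decay_bound (lam C : ℝ) (hlam : 0 < lam) (g : ℝ → ℝ)
    (hg : ∀ t, 0 ≤ t → ∃ gd, HasDerivAt g gd t ∧ gd ≤ -lam * g t + C) :
    ∀ t, 0 ≤ t → g t ≤ C / lam + Real.exp (-(lam * t)) * max (g 0 - C / lam) 0 := by
  set K := C / lam with hK
  set h : ℝ → ℝ := fun t => Real.exp (lam * t) * (g t - K) with hh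
  have hanti : AntitoneOn h (Set.Ici (0:ℝ)) := by
    apply antitoneOn_of_deriv_nonpos (convex_Ici 0)
    · intro t ht
      obtain ⟨gd, hgd, -⟩ := hg t ht
      exact (((hasDerivAt_id t).const_mul lam).exp.mul (hgd.sub_const K)).continuousAt.continuousWithinAt
    · intro t ht
      rw [interior_Ici] at ht
      obtain ⟨gd, hgd, -⟩ := hg t (le_of_lt ht)
      exact (((hasDerivAt_id t).const_mul lam).exp.mul (hgd.sub_const K)).differentiableAt.differentiableWithinAt
    · intro t ht
      rw [interior_Ici] at ht
      obtain ⟨gd, hgd, hle⟩ := hg t (le_of_lt ht)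
      have hd : HasDerivAt h (Real.exp (lam * t) * (lam * 1) * (g t - K)
          + Real.exp (lam * t) * gd) t :=
        (((hasDerivAt_id t).const_mul lam).exp.mul (hgd.sub_const K))
      rw [hd.deriv]
      have he : (0:ℝ) < Real.exp (lam * t) := Real.exp_pos _
      have : lam * (g t - K) + gd ≤ 0 := by
        rw [hK]
        have : lam * (C / lam) = C := by field_simp
        nlinarith
      nlinarith
  intro t ht
  have h0 : h 0 = g 0 - K := by simp [hh]
  have hht : Real.exp (lam * t) * (g t - K) ≤ g 0 - K := by
    have h2 := hanti Set.self_mem_Ici ht ht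
    rw [h0] at h2
    simpa [hh] using h2
  have h1 : g t - K ≤ Real.exp (-(lam*t)) * (g 0 - K) := by
    have h3 := mul_le_mul_of_nonneg_left hht (Real.exp_pos (-(lam*t))).le
    rwa [← mul_assoc, ← Real.exp_add, neg_add_cancel, Real.exp_zero, one_mul] at h3
  have h2 : Real.exp (-(lam*t)) * (g 0 - K) ≤ Real.exp (-(lam*t)) * max (g 0 - K) 0 :=
    mul_le_mul_of_nonneg_left (le_max_left _ _) (Real.exp_pos _).le
  linarith
end Analysis

set_option maxHeartbeats 1000000

/-- ultimate boundedness of the edge-difference vector.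
`G` is a connected undirected graph on `N` vertices whose edges are enumerated
(without repetition) by the endpoint maps `a b : Fin m → Fin N`; `D = incidenceMat a b`
is its incidence matrix and `L = D * Dᵀ` its Laplacian.  `lam2` is the second
smallest Laplacian eigenvalue, characterized by positivity together with the
variational (Courant–Fischer) inequality on the orthogonal complement of the
all-ones vector.  If the agents obey `ẋᵢ = -∑_{j ∈ N(i)} (xᵢ - xⱼ) + vᵢ` with
`‖vᵢ(t)‖ ≤ vmax`, then for every `R̄ > K₂ vmax` there is a time `T > 0` after
which the stacked edge-difference vector `x̃(t)` satisfies `‖x̃(t)‖ ≤ R̄`. -/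
theorem statement0
    (N m n : ℕ)
    (G : SimpleGraph (Fin N)) [DecidableRel G.Adj]
    (hconn : G.Connected)
    (a b : Fin m → Fin N)
    (hab : ∀ e, G.Adj (a e) (b e))
    (huniq : ∀ u v : Fin N, G.Adj u v →
      ∃! e : Fin m, (a e = u ∧ b e = v) ∨ (a e = v ∧ b e = u))
    (lam2 : ℝ) (hlam2 : 0 < lam2)
    (hvar : ∀ y : Fin N → ℝ, (∑ i, y i) = 0 →
      lam2 * (∑ i, (y i) ^ 2) ≤
        ∑ i, y i * ((incidenceMat a b * (incidenceMat a b)ᵀ).mulVec y i))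
    (vmax : ℝ) (hvmax : 0 < vmax)
    (x v : Fin N → ℝ → EuclideanSpace ℝ (Fin n))
    (hv : ∀ i t, 0 ≤ t → ‖v i t‖ ≤ vmax)
    (hdyn : ∀ i t, 0 ≤ t →
      HasDerivAt (x i) (-(∑ j ∈ G.neighborFinset i, (x i t - x j t)) + v i t) t)
    (R : ℝ)
    (hR : 2 * Real.sqrt N * ((N : ℝ) - 1) * matOpNorm (incidenceMat a b)ᵀ / lam2 ^ 2
      * vmax < R) :
    ∃ T : ℝ, 0 < T ∧ ∀ t, T ≤ t →
      Real.sqrt (∑ e : Fin m, ‖x (a e) t - x (b e) t‖ ^ 2) ≤ R := by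
  classical
  have hN : 0 < N := Fin.pos_iff_nonempty.mpr hconn.nonempty
  have hN1 : (1:ℝ) ≤ (N:ℝ) := by exact_mod_cast hN
  set M : ℝ := matOpNorm (incidenceMat a b)ᵀ with hM
  have hMnn : 0 ≤ M := norm_nonneg _
  have hRpos : 0 < R := by
    refine lt_of_le_of_lt ?_ hR
    have h1 : (0:ℝ) ≤ (N:ℝ) - 1 := by linarith
    exact mul_nonneg (div_nonneg (mul_nonneg (mul_nonneg
      (by positivity) h1) hMnn) (by positivity)) hvmax.le
  rcases Nat.eq_zero_or_pos m with hm | hm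
  · refine ⟨1, one_pos, fun t _ => ?_⟩
    subst hm
    simpa using hRpos.le
  have e0 : Fin m := ⟨0, hm⟩
  have hne : ∀ e, a e ≠ b e := fun e => (hab e).ne
  have hNne : (N:ℝ) ≠ 0 := by positivity
  set δ : Fin N → ℝ → EuclideanSpace ℝ (Fin n) :=
    fun i t => x i t - (N:ℝ)⁻¹ • ∑ j, x j t with hδdef
  set g : ℝ → ℝ := fun t => ∑ i, ⟪δ i t, δ i t⟫ with hgdef
  have hδsum : ∀ t, ∑ i, δ i t = 0 := by
    intro t
    simp only [hδdef]
    rw [Finset.sum_sub_distrib, Finset.sum_const, Finset.card_univ, Fintype.card_fin,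
      ← Nat.cast_smul_eq_nsmul ℝ, smul_smul, mul_inv_cancel₀ hNne, one_smul, sub_self]
  have hgnn : ∀ t, 0 ≤ g t := fun t =>
    Finset.sum_nonneg fun i _ => real_inner_self_nonneg
  -- derivative of δ i
  have hδd : ∀ i (t : ℝ), 0 ≤ t → HasDerivAt (δ i)
      (-(∑ j ∈ G.neighborFinset i, (δ i t - δ j t))
        + (v i t - (N:ℝ)⁻¹ • ∑ j, v j t)) t := by
    intro i t ht
    have hsum : HasDerivAt (fun s => ∑ j, x j s)
        (∑ j, (-(∑ k ∈ G.neighborFinset j, (x j t - x k t)) + v j t)) t :=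
      HasDerivAt.fun_sum (fun j _ => hdyn j t ht)
    have hz : ∑ j, (-(∑ k ∈ G.neighborFinset j, (x j t - x k t)) + v j t)
        = ∑ j, v j t := by
      rw [Finset.sum_add_distrib, Finset.sum_neg_distrib, zero_sum G (fun j => x j t),
        neg_zero, zero_add]
    rw [hz] at hsum
    have hxb : HasDerivAt (fun s => (N:ℝ)⁻¹ • ∑ j, x j s)
        ((N:ℝ)⁻¹ • ∑ j, v j t) t := hsum.const_smul ((N:ℝ)⁻¹)
    have hx := (hdyn i t ht).sub hxb
    have hrw : ∑ j ∈ G.neighborFinset i, (δ i t - δ j t)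
        = ∑ j ∈ G.neighborFinset i, (x i t - x j t) :=
      Finset.sum_congr rfl fun j _ => by simp only [hδdef]; abel
    have : -(∑ j ∈ G.neighborFinset i, (δ i t - δ j t))
        + (v i t - (N:ℝ)⁻¹ • ∑ j, v j t)
        = (-(∑ j ∈ G.neighborFinset i, (x i t - x j t)) + v i t)
          - (N:ℝ)⁻¹ • ∑ j, v j t := by rw [hrw]; abel
    rw [this]
    exact hx
  -- derivative bound for g
  set C : ℝ := (N:ℝ) * vmax^2 / lam2 with hC
  have hNpos : (0:ℝ) < (N:ℝ) := by positivity
  have hCl : lam2 * C = (N:ℝ) * vmax^2 := by rw [hC]; field_simp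
  have hnorm2 : ∀ (z : EuclideanSpace ℝ (Fin n)), ⟪z, z⟫ = ∑ k, (z k)^2 := by
    intro z
    rw [real_inner_self_eq_norm_sq, EuclideanSpace.norm_eq, Real.sq_sqrt (by positivity)]
    exact Finset.sum_congr rfl fun k _ => by rw [Real.norm_eq_abs, sq_abs]
  have hgderiv : ∀ (t : ℝ), 0 ≤ t → ∃ gd, HasDerivAt g gd t ∧ gd ≤ -lam2 * g t + C := by
    intro t ht
    set dd : Fin N → EuclideanSpace ℝ (Fin n) := fun i =>
      -(∑ j ∈ G.neighborFinset i, (δ i t - δ j t))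
        + (v i t - (N:ℝ)⁻¹ • ∑ j, v j t) with hdd
    refine ⟨∑ i, (⟪δ i t, dd i⟫ + ⟪dd i, δ i t⟫), HasDerivAt.fun_sum fun i _ =>
      HasDerivAt.inner (𝕜 := ℝ) (hδd i t ht) (hδd i t ht), ?_⟩
    set Q : ℝ := ∑ i, ⟪∑ j ∈ G.neighborFinset i, (δ i t - δ j t), δ i t⟫ with hQdef
    set P : ℝ := ∑ i, ⟪v i t - (N:ℝ)⁻¹ • ∑ j, v j t, δ i t⟫ with hPdef
    have hpt : ∀ i, ⟪δ i t, dd i⟫ + ⟪dd i, δ i t⟫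
        = 2 * (-(⟪∑ j ∈ G.neighborFinset i, (δ i t - δ j t), δ i t⟫)
          + ⟪v i t - (N:ℝ)⁻¹ • ∑ j, v j t, δ i t⟫) := by
      intro i
      simp only [hdd, inner_add_right, inner_neg_right, inner_add_left, inner_neg_left]
      rw [real_inner_comm (δ i t) (∑ j ∈ G.neighborFinset i, (δ i t - δ j t)),
        real_inner_comm (δ i t) (v i t - (N:ℝ)⁻¹ • ∑ j, v j t)]
      ring
    have hsplit : ∑ i, (⟪δ i t, dd i⟫ + ⟪dd i, δ i t⟫) = 2 * (-Q + P) := by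
      rw [Finset.sum_congr rfl fun i _ => hpt i, ← Finset.mul_sum,
        Finset.sum_add_distrib, Finset.sum_neg_distrib, hQdef, hPdef]
    -- Q ≥ lam2 * g t
    have hQ' : Q = ∑ e, ‖δ (a e) t - δ (b e) t‖ ^ 2 :=
      neighbor_inner_sum G a b hab huniq (fun i => δ i t)
    have hcoord : ∀ k : Fin n, lam2 * (∑ i, (δ i t k)^2)
        ≤ ∑ e, (δ (a e) t k - δ (b e) t k)^2 := by
      intro k
      have hsk : ∑ i, δ i t k = 0 := by
        have h1 := congrArg (EuclideanSpace.proj (𝕜 := ℝ) k) (hδsum t)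
        rw [map_sum] at h1
        simpa using h1
      have h2 := hvar (fun i => δ i t k) hsk
      rwa [quad_form_eq a b hne] at h2
    have hgt : g t = ∑ k, ∑ i, (δ i t k)^2 := by
      have h0 : g t = ∑ i, ∑ k, (δ i t k)^2 :=
        Finset.sum_congr rfl fun i _ => hnorm2 (δ i t)
      rw [h0]; exact Finset.sum_comm
    have hQ2 : ∑ e, ‖δ (a e) t - δ (b e) t‖^2
        = ∑ k, ∑ e, (δ (a e) t k - δ (b e) t k)^2 := by
      have h1 : ∀ e : Fin m, ‖δ (a e) t - δ (b e) t‖^2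
          = ∑ k, (δ (a e) t k - δ (b e) t k)^2 := by
        intro e
        rw [← real_inner_self_eq_norm_sq, hnorm2]
        exact Finset.sum_congr rfl fun k _ => by rw [PiLp.sub_apply]
      rw [Finset.sum_congr rfl fun e _ => h1 e]
      exact Finset.sum_comm
    have hQge : lam2 * g t ≤ Q := by
      calc lam2 * g t = ∑ k, lam2 * ∑ i, (δ i t k)^2 := by rw [hgt, Finset.mul_sum]
        _ ≤ ∑ k, ∑ e, (δ (a e) t k - δ (b e) t k)^2 :=
            Finset.sum_le_sum fun k _ => hcoord k
        _ = Q := by rw [hQ', hQ2]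
    -- P ≤ vmax * sqrt (N * g t)
    have hP1 : P = ∑ i, ⟪v i t, δ i t⟫ := by
      rw [hPdef, Finset.sum_congr rfl fun i _ => inner_sub_left _ _ _,
        Finset.sum_sub_distrib, ← inner_sum, hδsum t, inner_zero_right, sub_zero]
    have hP4 : (∑ i, ‖δ i t‖)^2 ≤ (N:ℝ) * g t := by
      have hcs := sq_sum_le_card_mul_sum_sq (s := (Finset.univ : Finset (Fin N)))
        (f := fun i => ‖δ i t‖)
      have hgeq : ∑ i, ‖δ i t‖^2 = g t := by
        rw [hgdef]
        exact Finset.sum_congr rfl fun i _ => (real_inner_self_eq_norm_sq _).symm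
      rw [hgeq] at hcs
      simpa using hcs
    have hP5 : ∑ i, ‖δ i t‖ ≤ Real.sqrt ((N:ℝ) * g t) := by
      rw [Real.le_sqrt (Finset.sum_nonneg fun i _ => norm_nonneg _)
        (mul_nonneg hNpos.le (hgnn t))]
      exact hP4
    have hPle : P ≤ vmax * Real.sqrt ((N:ℝ) * g t) := by
      have hP2 : P ≤ ∑ i, ‖v i t‖ * ‖δ i t‖ := by
        rw [hP1]
        exact Finset.sum_le_sum fun i _ => real_inner_le_norm _ _
      have hP3 : ∑ i, ‖v i t‖ * ‖δ i t‖ ≤ vmax * ∑ i, ‖δ i t‖ := by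
        rw [Finset.mul_sum]
        exact Finset.sum_le_sum fun i _ =>
          mul_le_mul_of_nonneg_right (hv i t ht) (norm_nonneg _)
      have hP6 := mul_le_mul_of_nonneg_left hP5 hvmax.le
      linarith
    -- Young and conclusion
    set s : ℝ := Real.sqrt ((N:ℝ) * g t) with hs
    have hs2 : s^2 = (N:ℝ) * g t := Real.sq_sqrt (mul_nonneg hNpos.le (hgnn t))
    have hsnn : 0 ≤ s := Real.sqrt_nonneg _
    have hCN : lam2 * C * (N:ℝ) = (N:ℝ)^2 * vmax^2 := by rw [hCl]; ring
    have hyoung : 2 * (vmax * s) ≤ lam2 * g t + C := by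
      nlinarith [sq_nonneg (lam2 * s - (N:ℝ) * vmax), mul_pos hlam2 hNpos, hs2, hCN,
        hgnn t, hlam2, hNpos]
    rw [hsplit]
    nlinarith [hQge, hPle, hyoung]
  -- apply the decay bound
  have hmain := decay_bound lam2 C hlam2 g hgderiv
  set K : ℝ := C / lam2 with hK
  set H : ℝ := max (g 0 - K) 0 with hH
  have hHnn : 0 ≤ H := le_max_right _ _
  -- edge sum bound
  have hedge : ∀ t : ℝ, ∑ e, ‖x (a e) t - x (b e) t‖^2 ≤ M^2 * g t := by
    intro t
    have hxδ : ∀ e, x (a e) t - x (b e) t = δ (a e) t - δ (b e) t := by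
      intro e; simp only [hδdef]; abel
    have h5 : ∑ e, ‖x (a e) t - x (b e) t‖^2
        = ∑ k, ∑ e, (δ (a e) t k - δ (b e) t k)^2 := by
      have h1 : ∀ e : Fin m, ‖x (a e) t - x (b e) t‖^2
          = ∑ k, (δ (a e) t k - δ (b e) t k)^2 := by
        intro e
        rw [hxδ e, ← real_inner_self_eq_norm_sq, hnorm2]
        exact Finset.sum_congr rfl fun k _ => by rw [PiLp.sub_apply]
      rw [Finset.sum_congr rfl fun e _ => h1 e]
      exact Finset.sum_comm
    have hgt : g t = ∑ k, ∑ i, (δ i t k)^2 := by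
      have h0 : g t = ∑ i, ∑ k, (δ i t k)^2 :=
        Finset.sum_congr rfl fun i _ => hnorm2 (δ i t)
      rw [h0]; exact Finset.sum_comm
    rw [h5, hgt, Finset.mul_sum]
    exact Finset.sum_le_sum fun k _ => sq_sum_le a b hne (fun i => δ i t k)
  -- lam2 ≤ 2 (N - 1) and B < R
  have hl2 := lam2_le G a b hab huniq lam2 hvar e0
  set B : ℝ := Real.sqrt (N:ℝ) * M * vmax / lam2 with hB
  have hsqrtN : (Real.sqrt (N:ℝ))^2 = (N:ℝ) := Real.sq_sqrt hNpos.le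
  have hBnn : 0 ≤ B := by
    apply div_nonneg _ hlam2.le
    exact mul_nonneg (mul_nonneg (Real.sqrt_nonneg _) hMnn) hvmax.le
  have hBR : B < R := by
    refine lt_of_le_of_lt ?_ hR
    rw [hB, div_mul_eq_mul_div, div_le_div_iff₀ hlam2 (by positivity)]
    have hnn : 0 ≤ Real.sqrt (N:ℝ) * M * vmax * lam2 := by positivity
    nlinarith [mul_le_mul_of_nonneg_left hl2 hnn]
  have hB2eq : M^2 * K = B^2 := by
    have e1 : B^2 = (N:ℝ) * M^2 * vmax^2 / lam2^2 := by
      rw [hB, div_pow, mul_pow, mul_pow, hsqrtN]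
    rw [e1, hK, hC]
    field_simp
  have hB2R : B^2 < R^2 := by nlinarith
  -- choose T
  have h1 : Filter.Tendsto (fun t : ℝ => lam2 * t) Filter.atTop Filter.atTop :=
    Filter.Tendsto.const_mul_atTop hlam2 Filter.tendsto_id
  have h2 : Filter.Tendsto (fun t : ℝ => Real.exp (-(lam2 * t))) Filter.atTop (nhds 0) :=
    Real.tendsto_exp_neg_atTop_nhds_zero.comp h1
  have h3 : Filter.Tendsto (fun t : ℝ => M^2 * H * Real.exp (-(lam2 * t)))
      Filter.atTop (nhds 0) := by
    have := h2.const_mul (M^2 * H)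
    simpa using this
  have hev : ∀ᶠ t in Filter.atTop, M^2 * H * Real.exp (-(lam2 * t)) < R^2 - B^2 :=
    h3.eventually_lt_const (by linarith)
  obtain ⟨T0, hT0⟩ := Filter.eventually_atTop.mp hev
  refine ⟨max T0 1, lt_of_lt_of_le one_pos (le_max_right _ _), fun t htt => ?_⟩
  have ht1 : (1:ℝ) ≤ t := le_trans (le_max_right _ _) htt
  have ht0 : (0:ℝ) ≤ t := by linarith
  have hgb := hmain t ht0
  have hexp := hT0 t (le_trans (le_max_left _ _) htt)
  have hfin : ∑ e, ‖x (a e) t - x (b e) t‖^2 ≤ R^2 := by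
    have hM2 := mul_le_mul_of_nonneg_left hgb (sq_nonneg M)
    have heq : M^2 * (K + Real.exp (-(lam2 * t)) * H)
        = B^2 + M^2 * H * Real.exp (-(lam2 * t)) := by rw [mul_add, hB2eq]; ring
    have := hedge t
    rw [heq] at hM2
    linarith
  have hsq := Real.sqrt_le_sqrt hfin
  rwa [Real.sqrt_sq hRpos.le] at hsq
end

section
/- Let G be an undirected graph on N ≥ 2 vertices with edge set E and incidence matrix D(G), and let x = (x₁,…,x_N) ∈ ℝ^{Nn}. Let x^⊥ be the orthogonal projection of x onto the orthogonal complement of the diagonal subspace H = { x ∈ ℝ^{Nn} : x₁ = x₂ = … = x_N }, and let x̃ ∈ ℝ^{|E|n} be the stacked vector of edge differences x_i − x_j over {i,j} ∈ E. Then ‖x^⊥‖ ≥ (1/√(2(N−1))) ‖x̃‖. -/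
open scoped BigOperators
open Matrix

/-- For an undirected graph on `N ≥ 2` vertices whose edges are
enumerated (without repetition) by the endpoint maps `a b : Fin m → Fin N`, and a
stacked vector `x = (x₁, …, x_N) ∈ ℝ^{Nn}`, the orthogonal projection
`x^⊥` of `x` onto the orthogonal complement of the diagonal subspace
`H = {x : x₁ = ⋯ = x_N}` (i.e. `x^⊥ᵢ = xᵢ - (1/N) ∑ⱼ xⱼ`) satisfies
`‖x^⊥‖ ≥ (1/√(2(N-1))) ‖x̃‖`, where `x̃` is the stacked vector of the edge
differences `xᵢ - xⱼ` over the edges of the graph. -/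
theorem statement2
    (N m n : ℕ) (hN : 2 ≤ N)
    (G : SimpleGraph (Fin N)) [DecidableRel G.Adj]
    (a b : Fin m → Fin N)
    (hab : ∀ e, G.Adj (a e) (b e))
    (huniq : ∀ u v : Fin N, G.Adj u v →
      ∃! e : Fin m, (a e = u ∧ b e = v) ∨ (a e = v ∧ b e = u))
    (x : Fin N → EuclideanSpace ℝ (Fin n)) :
    (1 / Real.sqrt (2 * ((N : ℝ) - 1))) *
        Real.sqrt (∑ e : Fin m, ‖x (a e) - x (b e)‖ ^ 2) ≤
      Real.sqrt (∑ i : Fin N, ‖x i - (N : ℝ)⁻¹ • ∑ j : Fin N, x j‖ ^ 2) := by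
  have hNR : (2:ℝ) ≤ (N:ℝ) := by exact_mod_cast hN
  have hN0 : (N:ℝ) ≠ 0 := by linarith
  set μ : EuclideanSpace ℝ (Fin n) := (N : ℝ)⁻¹ • ∑ j : Fin N, x j with hμ
  set y : Fin N → EuclideanSpace ℝ (Fin n) := fun i => x i - μ with hy
  set S : ℝ := ∑ i : Fin N, ‖y i‖ ^ 2 with hS
  set T : ℝ := ∑ e : Fin m, ‖x (a e) - x (b e)‖ ^ 2 with hT
  have hS0 : 0 ≤ S := Finset.sum_nonneg fun i _ => by positivity
  have hysum : ∑ i : Fin N, y i = 0 := by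
    simp only [hy, Finset.sum_sub_distrib, Finset.sum_const, Finset.card_univ,
      Fintype.card_fin]
    rw [← Nat.cast_smul_eq_nsmul ℝ, hμ, smul_smul, mul_inv_cancel₀ hN0, one_smul, sub_self]
  -- identity: sum over all ordered pairs
  have hident : ∑ p : Fin N × Fin N, ‖y p.1 - y p.2‖ ^ 2 = 2 * N * S := by
    have h1 : ∀ p : Fin N × Fin N, ‖y p.1 - y p.2‖ ^ 2
        = ‖y p.1‖ ^ 2 - 2 * (inner ℝ (y p.1) (y p.2) : ℝ) + ‖y p.2‖ ^ 2 := by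
      intro p; exact norm_sub_sq_real _ _
    rw [Fintype.sum_congr _ _ h1]
    rw [Fintype.sum_prod_type]
    have h2 : ∑ i : Fin N, ∑ j : Fin N, (inner ℝ (y i) (y j) : ℝ)
        = inner ℝ (∑ i : Fin N, y i) (∑ j : Fin N, y j) := by
      rw [sum_inner]; exact Finset.sum_congr rfl fun i _ => (inner_sum _ _ _).symm
    simp only [Finset.sum_add_distrib, Finset.sum_sub_distrib, ← Finset.mul_sum,
      Finset.sum_const, Finset.card_univ, Fintype.card_fin]
    rw [h2, hysum, inner_zero_left]
    simp only [nsmul_eq_mul, ← Finset.mul_sum, mul_zero, sub_zero, ← hS]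
    ring
  -- edge differences
  have hxy : ∀ i j : Fin N, x i - x j = y i - y j := by
    intro i j; simp only [hy]; abel
  classical
  set g₁ : Fin m → Fin N × Fin N := fun e => (a e, b e) with hg₁
  set g₂ : Fin m → Fin N × Fin N := fun e => (b e, a e) with hg₂
  have hinj₁ : Function.Injective g₁ := by
    intro e e' h
    have ha : a e = a e' := congrArg Prod.fst h
    have hb : b e = b e' := congrArg Prod.snd h
    obtain ⟨e₀, -, huq⟩ := huniq (a e) (b e) (hab e)
    exact (huq e (Or.inl ⟨rfl, rfl⟩)).trans (huq e' (Or.inl ⟨ha.symm, hb.symm⟩)).symm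
  have hinj₂ : Function.Injective g₂ := by
    intro e e' h
    have hb : b e = b e' := congrArg Prod.fst h
    have ha : a e = a e' := congrArg Prod.snd h
    obtain ⟨e₀, -, huq⟩ := huniq (a e) (b e) (hab e)
    exact (huq e (Or.inl ⟨rfl, rfl⟩)).trans (huq e' (Or.inl ⟨ha.symm, hb.symm⟩)).symm
  have hdisj : Disjoint (Finset.image g₁ Finset.univ) (Finset.image g₂ Finset.univ) := by
    rw [Finset.disjoint_left]
    rintro p hp₁ hp₂
    obtain ⟨e, -, he⟩ := Finset.mem_image.1 hp₁
    obtain ⟨e', -, he'⟩ := Finset.mem_image.1 hp₂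
    have heq : g₁ e = g₂ e' := he.trans he'.symm
    have h1 : a e = b e' := congrArg Prod.fst heq
    have h2 : b e = a e' := congrArg Prod.snd heq
    obtain ⟨e₀, -, huq⟩ := huniq (a e) (b e) (hab e)
    have hee : e = e' :=
      (huq e (Or.inl ⟨rfl, rfl⟩)).trans (huq e' (Or.inr ⟨h2.symm, h1.symm⟩)).symm
    exact (hab e).ne (h1.trans (hee ▸ rfl : b e' = b e))
  have hf : ∀ e, ‖x (a e) - x (b e)‖ ^ 2 = ‖y (a e) - y (b e)‖ ^ 2 := fun e => by
    rw [hxy]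
  set f : Fin N × Fin N → ℝ := fun p => ‖y p.1 - y p.2‖ ^ 2 with hfdef
  have hT1 : T = ∑ p ∈ Finset.image g₁ Finset.univ, f p := by
    rw [Finset.sum_image (fun e _ e' _ h => hinj₁ h)]
    exact Finset.sum_congr rfl fun e _ => hf e
  have hT2 : T = ∑ p ∈ Finset.image g₂ Finset.univ, f p := by
    rw [Finset.sum_image (fun e _ e' _ h => hinj₂ h)]
    refine Finset.sum_congr rfl fun e _ => ?_
    rw [hf e, hfdef]; simp only [hg₂]
    rw [norm_sub_rev]
  have h2T : 2 * T ≤ 2 * N * S := by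
    have : 2 * T = ∑ p ∈ Finset.image g₁ Finset.univ ∪ Finset.image g₂ Finset.univ, f p := by
      rw [Finset.sum_union hdisj, ← hT1, ← hT2]; ring
    rw [this, ← hident]
    exact Finset.sum_le_sum_of_subset_of_nonneg (Finset.subset_univ _)
      (fun p _ _ => by positivity)
  have hTS : T ≤ 2 * ((N:ℝ) - 1) * S := by nlinarith
  have hsq : Real.sqrt T ≤ Real.sqrt (2 * ((N:ℝ) - 1)) * Real.sqrt S := by
    rw [← Real.sqrt_mul (by linarith)]
    exact Real.sqrt_le_sqrt hTS
  have hc : 0 < Real.sqrt (2 * ((N:ℝ) - 1)) := Real.sqrt_pos.2 (by linarith)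
  rw [div_mul_eq_mul_div, one_mul, div_le_iff₀ hc] at *
  calc Real.sqrt T ≤ Real.sqrt (2 * ((N:ℝ) - 1)) * Real.sqrt S := hsq
    _ = Real.sqrt S * Real.sqrt (2 * ((N:ℝ) - 1)) := by ring
end

section
/- Let G be a connected undirected graph on N ≥ 2 vertices with incidence matrix D(G) and Laplacian L(G) = D(G) D(G)^T with second smallest eigenvalue λ₂(G) > 0. Let v_max > 0, K₁ = λ₂(G)²/(2(N−1)) and K₂ = 2 √N (N−1) ‖D(G)^T‖ / λ₂(G)². For x = (x₁,…,x_N) ∈ ℝ^{Nn} and v = (v₁,…,v_N) ∈ ℝ^{Nn} with ‖v_i‖ ≤ v_max for all i, and with c(x,k) ∈ ℝᴺ denoting the vector of k-th coordinates of the blocks x₁,…,x_N, the following inequality holds: ∑_{k=1}^{n} ⟨ L(G) c(x,k), −L(G) c(x,k) + c(v,k) ⟩ ≤ −K₁ ‖x̃‖ ( ‖x̃‖ − K₂ v_max ), where x̃ = D(G)^T x applied componentwise in each of the n coordinates. -/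
open scoped BigOperators
open Matrix

section Aux

variable {N m : ℕ}

lemma edge_apply (a b : Fin m → Fin N) (hne : ∀ e, a e ≠ b e) (y : Fin N → ℝ) (e : Fin m) :
    (incidenceMat a b)ᵀ.mulVec y e = y (a e) - y (b e) := by
  have : ∀ i, (incidenceMat a b)ᵀ e i * y i =
      (if a e = i then y i else 0) + (if b e = i then -y i else 0) := by
    intro i
    simp only [incidenceMat, transpose_apply, of_apply]
    rcases eq_or_ne i (a e) with h | h
    · subst h; simp [(hne e).symm, eq_comm]
    · rcases eq_or_ne i (b e) with h2 | h2
      · subst h2; simp [h, (hne e), eq_comm]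
      · simp [h, h2, Ne.symm h, Ne.symm h2]
  unfold Matrix.mulVec dotProduct
  rw [Finset.sum_congr rfl fun i _ => this i, Finset.sum_add_distrib]
  simp [sub_eq_add_neg]

lemma lap_inner (a b : Fin m → Fin N) (hne : ∀ e, a e ≠ b e) (y z : Fin N → ℝ) :
    ∑ i, z i * ((incidenceMat a b * (incidenceMat a b)ᵀ).mulVec y i)
      = ∑ e, (z (a e) - z (b e)) * (y (a e) - y (b e)) := by
  have h1 : ∑ i, z i * ((incidenceMat a b * (incidenceMat a b)ᵀ).mulVec y i)
      = z ⬝ᵥ (incidenceMat a b).mulVec ((incidenceMat a b)ᵀ.mulVec y) := by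
    rw [← Matrix.mulVec_mulVec]; rfl
  rw [h1, Matrix.dotProduct_mulVec, ← Matrix.mulVec_transpose]
  unfold dotProduct
  exact Finset.sum_congr rfl fun e _ => by
    rw [edge_apply a b hne, edge_apply a b hne]

lemma deg_bound (G : SimpleGraph (Fin N)) (a b : Fin m → Fin N)
    (hab : ∀ e, G.Adj (a e) (b e))
    (huniq : ∀ u v : Fin N, G.Adj u v →
      ∃! e : Fin m, (a e = u ∧ b e = v) ∨ (a e = v ∧ b e = u))
    (i : Fin N) :
    (Finset.univ.filter (fun e => a e = i ∨ b e = i)).card ≤ N - 1 := by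
  classical
  set S := Finset.univ.filter (fun e => a e = i ∨ b e = i) with hS
  have hmem : ∀ e ∈ S, a e = i ∨ b e = i := by
    intro e he; simpa [hS] using he
  set f : Fin m → Fin N := fun e => if a e = i then b e else a e with hf
  have hprop : ∀ e ∈ S, (a e = i ∧ b e = f e) ∨ (a e = f e ∧ b e = i) := by
    intro e he
    rcases hmem e he with h | h
    · left; exact ⟨h, by simp [hf, h]⟩
    · rcases eq_or_ne (a e) i with h2 | h2
      · left; exact ⟨h2, by simp [hf, h2]⟩
      · right; exact ⟨by simp [hf, h2], h⟩
  have hadj : ∀ e ∈ S, G.Adj i (f e) := by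
    intro e he
    rcases hprop e he with ⟨h1, h2⟩ | ⟨h1, h2⟩
    · rw [← h1, ← h2]; exact hab e
    · rw [← h1, ← h2]; exact (hab e).symm
  have hinj : Set.InjOn f S := by
    intro e1 h1 e2 h2 hfe
    have hadj1 := hadj e1 (by simpa using h1)
    obtain ⟨e0, _, hu⟩ := huniq i (f e1) hadj1
    have k1 : e1 = e0 := by
      apply hu; rcases hprop e1 (by simpa using h1) with ⟨p, q⟩ | ⟨p, q⟩
      · exact Or.inl ⟨p, q⟩
      · exact Or.inr ⟨p, q⟩
    have k2 : e2 = e0 := by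
      apply hu; rcases hprop e2 (by simpa using h2) with ⟨p, q⟩ | ⟨p, q⟩
      · exact Or.inl ⟨p, hfe ▸ q⟩
      · exact Or.inr ⟨hfe ▸ p, q⟩
    exact k1.trans k2.symm
  have hmaps : ∀ e ∈ S, f e ∈ Finset.univ.erase i := by
    intro e he
    refine Finset.mem_erase.2 ⟨(hadj e he).ne', Finset.mem_univ _⟩
  have := Finset.card_le_card_of_injOn f hmaps hinj
  simpa [Finset.card_erase_of_mem] using this

lemma quad_bound (a b : Fin m → Fin N) (hne : ∀ e, a e ≠ b e)
    (hdeg : ∀ i, (Finset.univ.filter (fun e => a e = i ∨ b e = i)).card ≤ N - 1)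
    (hN : 1 ≤ N) (y : Fin N → ℝ) :
    ∑ e, (y (a e) - y (b e)) ^ 2 ≤ 2 * ((N : ℝ) - 1) * ∑ i, y i ^ 2 := by
  classical
  have step1 : ∑ e, (y (a e) - y (b e)) ^ 2 ≤ 2 * ∑ e, (y (a e) ^ 2 + y (b e) ^ 2) := by
    rw [Finset.mul_sum]
    refine Finset.sum_le_sum fun e _ => ?_
    nlinarith [sq_nonneg (y (a e) + y (b e))]
  have step2 : ∑ e : Fin m, (y (a e) ^ 2 + y (b e) ^ 2)
      = ∑ i, ((Finset.univ.filter (fun e => a e = i ∨ b e = i)).card : ℝ) * y i ^ 2 := by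
    have he : ∀ e : Fin m, y (a e) ^ 2 + y (b e) ^ 2 =
        ∑ i, ((if a e = i then y i ^ 2 else 0) + (if b e = i then y i ^ 2 else 0)) := by
      intro e
      rw [Finset.sum_add_distrib, Finset.sum_ite_eq Finset.univ (a e) (fun i => y i ^ 2),
        Finset.sum_ite_eq Finset.univ (b e) (fun i => y i ^ 2)]
      simp
    rw [Finset.sum_congr rfl fun e _ => he e, Finset.sum_comm]
    refine Finset.sum_congr rfl fun i _ => ?_
    have hdisj : Disjoint (Finset.univ.filter (fun e => a e = i))
        (Finset.univ.filter (fun e => b e = i)) := by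
      rw [Finset.disjoint_left]
      intro e h1 h2
      exact hne e (((Finset.mem_filter.1 h1).2).trans ((Finset.mem_filter.1 h2).2).symm)
    have hcard : (Finset.univ.filter (fun e => a e = i ∨ b e = i)).card
        = (Finset.univ.filter (fun e => a e = i)).card
          + (Finset.univ.filter (fun e => b e = i)).card := by
      rw [Finset.filter_or, Finset.card_union_of_disjoint hdisj]
    rw [Finset.sum_add_distrib, ← Finset.sum_filter, ← Finset.sum_filter,
      Finset.sum_const, Finset.sum_const, hcard]
    push_cast
    ring
  rw [step2] at step1
  have hsum : ∑ i, ((Finset.univ.filter (fun e => a e = i ∨ b e = i)).card : ℝ) * y i ^ 2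
      ≤ ((N : ℝ) - 1) * ∑ i, y i ^ 2 := by
    rw [Finset.mul_sum]
    refine Finset.sum_le_sum fun i _ => mul_le_mul_of_nonneg_right ?_ (sq_nonneg _)
    have h2 : ((Finset.univ.filter (fun e => a e = i ∨ b e = i)).card : ℝ)
        ≤ ((N - 1 : ℕ) : ℝ) := by exact_mod_cast hdeg i
    refine h2.trans ?_
    rw [Nat.cast_sub hN]
    simp
  nlinarith [step1, hsum]

lemma cs_sqrt {ι : Type*} [Fintype ι] (f g : ι → ℝ) :
    ∑ i, f i * g i ≤ Real.sqrt (∑ i, f i ^ 2) * Real.sqrt (∑ i, g i ^ 2) := by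
  have h := Finset.sum_mul_sq_le_sq_mul_sq Finset.univ f g
  have h2 := Real.sqrt_le_sqrt h
  rw [Real.sqrt_sq_eq_abs, Real.sqrt_mul (by positivity)] at h2
  exact (le_abs_self _).trans h2

lemma opnorm_bound {p q : ℕ} (A : Matrix (Fin p) (Fin q) ℝ) (w : Fin q → ℝ) :
    ∑ i, (A.mulVec w i) ^ 2 ≤ matOpNorm A ^ 2 * ∑ j, w j ^ 2 := by
  set T := LinearMap.toContinuousLinearMap (Matrix.toEuclideanLin A) with hT
  set w' : EuclideanSpace ℝ (Fin q) := (WithLp.equiv 2 _).symm w with hw'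
  have h1 : ‖T w'‖ ≤ matOpNorm A * ‖w'‖ := T.le_opNorm w'
  have h2 : T w' = (WithLp.equiv 2 (Fin p → ℝ)).symm (A.mulVec w) := by
    simp [hT, hw']
  have h3 : ‖T w'‖ = Real.sqrt (∑ i, (A.mulVec w i) ^ 2) := by
    rw [h2, EuclideanSpace.norm_eq]
    congr 1
    refine Finset.sum_congr rfl fun i _ => ?_
    simp [Real.norm_eq_abs, sq_abs]
  have h4 : ‖w'‖ = Real.sqrt (∑ j, w j ^ 2) := by
    rw [hw', EuclideanSpace.norm_eq]
    congr 1
    refine Finset.sum_congr rfl fun j _ => ?_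
    simp [Real.norm_eq_abs, sq_abs]
  have h5 : Real.sqrt (∑ i, (A.mulVec w i) ^ 2) ≤ matOpNorm A * Real.sqrt (∑ j, w j ^ 2) := by
    rw [← h3, ← h4]; exact h1
  have hnn : (0:ℝ) ≤ ∑ i, (A.mulVec w i) ^ 2 := by positivity
  have h6 := mul_self_le_mul_self (Real.sqrt_nonneg _) h5
  rw [Real.mul_self_sqrt hnn] at h6
  calc ∑ i, (A.mulVec w i) ^ 2 ≤ (matOpNorm A * Real.sqrt (∑ j, w j ^ 2)) *
        (matOpNorm A * Real.sqrt (∑ j, w j ^ 2)) := h6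
    _ = matOpNorm A ^ 2 * ∑ j, w j ^ 2 := by
        rw [mul_mul_mul_comm, Real.mul_self_sqrt (by positivity)]; ring

lemma spectral (a b : Fin m → Fin N) (hne : ∀ e, a e ≠ b e)
    (hdeg : ∀ i, (Finset.univ.filter (fun e => a e = i ∨ b e = i)).card ≤ N - 1)
    (hN : 1 ≤ N) (hNR : (1:ℝ) ≤ (N : ℝ) - 1)
    (lam2 : ℝ) (hlam2 : 0 < lam2)
    (hvar : ∀ y : Fin N → ℝ, (∑ i, y i) = 0 →
      lam2 * (∑ i, (y i) ^ 2) ≤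
        ∑ i, y i * ((incidenceMat a b * (incidenceMat a b)ᵀ).mulVec y i))
    (y : Fin N → ℝ) :
    lam2 ^ 2 / (2 * ((N : ℝ) - 1)) * ∑ e, (y (a e) - y (b e)) ^ 2 ≤
      ∑ i, ((incidenceMat a b * (incidenceMat a b)ᵀ).mulVec y i) ^ 2 := by
  have hNne : (0:ℝ) < (N : ℝ) := by linarith
  set c : ℝ := (∑ i, y i) / N with hc
  set z : Fin N → ℝ := fun i => y i - c with hz
  have hzsum : ∑ i, z i = 0 := by
    simp only [hz, Finset.sum_sub_distrib, Finset.sum_const, Finset.card_univ,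
      Fintype.card_fin, nsmul_eq_mul, hc]
    field_simp
    ring
  have hdiff : ∀ e, z (a e) - z (b e) = y (a e) - y (b e) := fun e => by simp [hz]
  have hDz : (incidenceMat a b)ᵀ.mulVec z = (incidenceMat a b)ᵀ.mulVec y :=
    funext fun e => by rw [edge_apply a b hne, edge_apply a b hne, hdiff]
  have hLz : (incidenceMat a b * (incidenceMat a b)ᵀ).mulVec z
      = (incidenceMat a b * (incidenceMat a b)ᵀ).mulVec y := by
    rw [← Matrix.mulVec_mulVec, ← Matrix.mulVec_mulVec, hDz]
  have hinner : ∑ i, z i * ((incidenceMat a b * (incidenceMat a b)ᵀ).mulVec z i)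
      = ∑ e, (y (a e) - y (b e)) ^ 2 := by
    rw [lap_inner a b hne]
    exact Finset.sum_congr rfl fun e _ => by rw [hdiff]; ring
  set s := ∑ e, (y (a e) - y (b e)) ^ 2 with hs
  set t := ∑ i, z i ^ 2 with ht
  set Q := ∑ i, ((incidenceMat a b * (incidenceMat a b)ᵀ).mulVec y i) ^ 2 with hQ
  have hvt : lam2 * t ≤ s := by rw [← hinner]; exact hvar z hzsum
  have hst : s ≤ 2 * ((N : ℝ) - 1) * t := by
    refine le_trans (le_of_eq ?_) (quad_bound a b hne hdeg hN z)
    exact Finset.sum_congr rfl fun e _ => by rw [← hdiff e]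
  have hCS : s ^ 2 ≤ t * Q := by
    rw [← hinner]
    calc (∑ i, z i * ((incidenceMat a b * (incidenceMat a b)ᵀ).mulVec z i)) ^ 2
        ≤ (∑ i, z i ^ 2) *
          ∑ i, ((incidenceMat a b * (incidenceMat a b)ᵀ).mulVec z i) ^ 2 :=
        Finset.sum_mul_sq_le_sq_mul_sq _ _ _
      _ = t * Q := by rw [hLz]
  have hsnn : 0 ≤ s := Finset.sum_nonneg fun _ _ => sq_nonneg _
  have htnn : 0 ≤ t := Finset.sum_nonneg fun _ _ => sq_nonneg _
  have hQnn : 0 ≤ Q := Finset.sum_nonneg fun _ _ => sq_nonneg _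
  rw [div_mul_eq_mul_div, div_le_iff₀ (by linarith : (0:ℝ) < 2 * ((N : ℝ) - 1))]
  rcases eq_or_lt_of_le htnn with h0 | h0
  · have hs0 : s = 0 := le_antisymm (by rw [← h0] at hst; linarith) hsnn
    rw [hs0]
    nlinarith [hQnn]
  · have h2 : lam2 ^ 2 * t ≤ Q := by nlinarith [hCS, mul_le_mul hvt hvt (by positivity) hsnn, h0, hlam2]
    nlinarith [mul_le_mul_of_nonneg_left hst (sq_nonneg lam2),
      mul_le_mul_of_nonneg_left h2 (by linarith : (0:ℝ) ≤ 2 * ((N : ℝ) - 1))]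

end Aux
set_option maxHeartbeats 1000000 in
/-- Lyapunov derivative estimate.  For a connected graph on
`N ≥ 2` vertices with incidence matrix `D`, Laplacian `L = D Dᵀ` and second
smallest eigenvalue `lam2 > 0` (characterized variationally), constants
`K₁ = lam2²/(2(N-1))` and `K₂ = 2 √N (N-1) ‖Dᵀ‖ / lam2²`, stacked vectors
`x, v ∈ ℝ^{Nn}` with `‖vᵢ‖ ≤ vmax`, and `c(x,k)` the vector of `k`-th
coordinates of the blocks, one has
`∑ₖ ⟨L c(x,k), -L c(x,k) + c(v,k)⟩ ≤ -K₁ ‖x̃‖ (‖x̃‖ - K₂ vmax)`. -/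
theorem statement3
    (N m n : ℕ) (hN : 2 ≤ N)
    (G : SimpleGraph (Fin N)) [DecidableRel G.Adj]
    (hconn : G.Connected)
    (a b : Fin m → Fin N)
    (hab : ∀ e, G.Adj (a e) (b e))
    (huniq : ∀ u v : Fin N, G.Adj u v →
      ∃! e : Fin m, (a e = u ∧ b e = v) ∨ (a e = v ∧ b e = u))
    (lam2 : ℝ) (hlam2 : 0 < lam2)
    (hvar : ∀ y : Fin N → ℝ, (∑ i, y i) = 0 →
      lam2 * (∑ i, (y i) ^ 2) ≤
        ∑ i, y i * ((incidenceMat a b * (incidenceMat a b)ᵀ).mulVec y i))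
    (vmax : ℝ) (hvmax : 0 < vmax)
    (x v : Fin N → EuclideanSpace ℝ (Fin n))
    (hv : ∀ i, ‖v i‖ ≤ vmax) :
    ∑ k : Fin n, ∑ i : Fin N,
        ((incidenceMat a b * (incidenceMat a b)ᵀ).mulVec (fun j => x j k) i) *
          (-((incidenceMat a b * (incidenceMat a b)ᵀ).mulVec (fun j => x j k) i)
            + v i k) ≤
      -(lam2 ^ 2 / (2 * ((N : ℝ) - 1))) *
        Real.sqrt (∑ e : Fin m, ‖x (a e) - x (b e)‖ ^ 2) *
        (Real.sqrt (∑ e : Fin m, ‖x (a e) - x (b e)‖ ^ 2) -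
          (2 * Real.sqrt N * ((N : ℝ) - 1) * matOpNorm (incidenceMat a b)ᵀ / lam2 ^ 2)
            * vmax) := by
  classical
  have hne : ∀ e, a e ≠ b e := fun e => (hab e).ne
  have hdeg := deg_bound G a b hab huniq
  have hN1 : 1 ≤ N := le_trans (by norm_num) hN
  have hNR : (1:ℝ) ≤ (N : ℝ) - 1 := by
    have : (2:ℝ) ≤ (N : ℝ) := by exact_mod_cast hN
    linarith
  set opn := matOpNorm (incidenceMat a b)ᵀ with hopn
  have hopn_nonneg : 0 ≤ opn := norm_nonneg _
  set X2 := ∑ e : Fin m, ‖x (a e) - x (b e)‖ ^ 2 with hX2def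
  have hX2nn : 0 ≤ X2 := Finset.sum_nonneg fun _ _ => sq_nonneg _
  set X := Real.sqrt X2 with hXdef
  have hX2 : X2 = ∑ k : Fin n, ∑ e : Fin m, (x (a e) k - x (b e) k) ^ 2 := by
    rw [hX2def,
      show (∑ e : Fin m, ‖x (a e) - x (b e)‖ ^ 2)
          = ∑ e : Fin m, ∑ k : Fin n, (x (a e) k - x (b e) k) ^ 2 from
        Finset.sum_congr rfl fun e _ => by
          rw [EuclideanSpace.norm_eq, Real.sq_sqrt (by positivity)]
          exact Finset.sum_congr rfl fun k _ => by
            simp [Real.norm_eq_abs, sq_abs]]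
    exact Finset.sum_comm

  -- spectral bound per coordinate
  have hQ : ∀ k : Fin n, lam2 ^ 2 / (2 * ((N : ℝ) - 1)) *
        ∑ e, (x (a e) k - x (b e) k) ^ 2 ≤
      ∑ i, ((incidenceMat a b * (incidenceMat a b)ᵀ).mulVec (fun j => x j k) i) ^ 2 :=
    fun k => spectral a b hne hdeg hN1 hNR lam2 hlam2 hvar (fun j => x j k)
  -- expand LHS
  have hexp : ∀ k : Fin n, ∑ i,
        ((incidenceMat a b * (incidenceMat a b)ᵀ).mulVec (fun j => x j k) i) *
          (-((incidenceMat a b * (incidenceMat a b)ᵀ).mulVec (fun j => x j k) i) + v i k)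
      = -(∑ i, ((incidenceMat a b * (incidenceMat a b)ᵀ).mulVec (fun j => x j k) i) ^ 2)
        + ∑ i, (v i k) * ((incidenceMat a b * (incidenceMat a b)ᵀ).mulVec (fun j => x j k) i) := by
    intro k
    have h : ∀ i, ((incidenceMat a b * (incidenceMat a b)ᵀ).mulVec (fun j => x j k) i) *
          (-((incidenceMat a b * (incidenceMat a b)ᵀ).mulVec (fun j => x j k) i) + v i k)
        = -(((incidenceMat a b * (incidenceMat a b)ᵀ).mulVec (fun j => x j k) i) ^ 2)
          + (v i k) * ((incidenceMat a b * (incidenceMat a b)ᵀ).mulVec (fun j => x j k) i) :=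
      fun i => by ring
    rw [Finset.sum_congr rfl fun i _ => h i, Finset.sum_add_distrib, Finset.sum_neg_distrib]
  have hcross_k : ∀ k : Fin n, ∑ i, (v i k) *
        ((incidenceMat a b * (incidenceMat a b)ᵀ).mulVec (fun j => x j k) i)
      = ∑ e, (v (a e) k - v (b e) k) * (x (a e) k - x (b e) k) :=
    fun k => lap_inner a b hne _ _
  -- cross term bound
  have hA : ∑ p : Fin n × Fin m, (v (a p.2) p.1 - v (b p.2) p.1) ^ 2
      ≤ opn ^ 2 * ((N : ℝ) * vmax ^ 2) := by
    rw [Fintype.sum_prod_type]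
    have hk : ∀ k : Fin n, ∑ e, (v (a e) k - v (b e) k) ^ 2
        ≤ opn ^ 2 * ∑ i, (v i k) ^ 2 := by
      intro k
      refine le_trans (le_of_eq ?_) (opnorm_bound (incidenceMat a b)ᵀ (fun j => v j k))
      exact Finset.sum_congr rfl fun e _ => by
        rw [edge_apply a b hne (fun j => v j k) e]
    have hvi : ∀ i, ∑ k, (v i k) ^ 2 ≤ vmax ^ 2 := by
      intro i
      have h1 : ∑ k, (v i k) ^ 2 = ‖v i‖ ^ 2 := by
        rw [EuclideanSpace.norm_eq, Real.sq_sqrt (by positivity)]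
        exact Finset.sum_congr rfl fun k _ => by simp [Real.norm_eq_abs, sq_abs]
      rw [h1]
      exact pow_le_pow_left₀ (norm_nonneg _) (hv i) 2
    calc ∑ k : Fin n, ∑ e, (v (a e) k - v (b e) k) ^ 2
        ≤ ∑ k : Fin n, opn ^ 2 * ∑ i, (v i k) ^ 2 := Finset.sum_le_sum fun k _ => hk k
      _ = opn ^ 2 * ∑ i : Fin N, ∑ k, (v i k) ^ 2 := by
          rw [← Finset.mul_sum, Finset.sum_comm]
      _ ≤ opn ^ 2 * ((N : ℝ) * vmax ^ 2) := by
          refine mul_le_mul_of_nonneg_left ?_ (sq_nonneg opn)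
          calc ∑ i : Fin N, ∑ k, (v i k) ^ 2 ≤ ∑ _i : Fin N, vmax ^ 2 :=
              Finset.sum_le_sum fun i _ => hvi i
            _ = (N : ℝ) * vmax ^ 2 := by
              rw [Finset.sum_const, Finset.card_univ, Fintype.card_fin, nsmul_eq_mul]
  have hB : ∑ p : Fin n × Fin m, (x (a p.2) p.1 - x (b p.2) p.1) ^ 2 = X2 := by
    rw [Fintype.sum_prod_type, ← hX2]
  have hcross : ∑ k : Fin n, ∑ e, (v (a e) k - v (b e) k) * (x (a e) k - x (b e) k)
      ≤ (Real.sqrt (N : ℝ) * opn * vmax) * X := by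
    calc ∑ k : Fin n, ∑ e, (v (a e) k - v (b e) k) * (x (a e) k - x (b e) k)
        = ∑ p : Fin n × Fin m,
            (v (a p.2) p.1 - v (b p.2) p.1) * (x (a p.2) p.1 - x (b p.2) p.1) :=
          (Fintype.sum_prod_type (fun p : Fin n × Fin m =>
            (v (a p.2) p.1 - v (b p.2) p.1) * (x (a p.2) p.1 - x (b p.2) p.1))).symm
      _ ≤ Real.sqrt (∑ p : Fin n × Fin m, (v (a p.2) p.1 - v (b p.2) p.1) ^ 2) *
          Real.sqrt (∑ p : Fin n × Fin m, (x (a p.2) p.1 - x (b p.2) p.1) ^ 2) :=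
          cs_sqrt _ _
      _ ≤ (Real.sqrt (N : ℝ) * opn * vmax) * X := by
          rw [hB, ← hXdef]
          refine mul_le_mul_of_nonneg_right ?_ (Real.sqrt_nonneg _)
          refine le_trans (Real.sqrt_le_sqrt hA) ?_
          have h2 : Real.sqrt (opn ^ 2 * ((N : ℝ) * vmax ^ 2))
              = opn * (Real.sqrt (N : ℝ) * vmax) := by
            rw [Real.sqrt_mul (sq_nonneg _), Real.sqrt_sq hopn_nonneg,
              Real.sqrt_mul (Nat.cast_nonneg N), Real.sqrt_sq (le_of_lt hvmax)]
          rw [h2]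
          exact le_of_eq (by ring)
  -- RHS identity
  have hXX : X * X = X2 := Real.mul_self_sqrt hX2nn
  have hRHS : -(lam2 ^ 2 / (2 * ((N : ℝ) - 1))) * X *
        (X - (2 * Real.sqrt (N : ℝ) * ((N : ℝ) - 1) * opn / lam2 ^ 2) * vmax)
      = -(lam2 ^ 2 / (2 * ((N : ℝ) - 1)) * X2)
        + (Real.sqrt (N : ℝ) * opn * vmax) * X := by
    have e1 : -(lam2 ^ 2 / (2 * ((N : ℝ) - 1))) * X *
          (X - (2 * Real.sqrt (N : ℝ) * ((N : ℝ) - 1) * opn / lam2 ^ 2) * vmax)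
        = -(lam2 ^ 2 / (2 * ((N : ℝ) - 1)) * (X * X))
          + (lam2 ^ 2 / (2 * ((N : ℝ) - 1)) *
              (2 * Real.sqrt (N : ℝ) * ((N : ℝ) - 1) * opn / lam2 ^ 2)) * (vmax * X) := by
      ring
    have e2 : lam2 ^ 2 / (2 * ((N : ℝ) - 1)) *
          (2 * Real.sqrt (N : ℝ) * ((N : ℝ) - 1) * opn / lam2 ^ 2)
        = Real.sqrt (N : ℝ) * opn := by
      have hl : lam2 ≠ 0 := ne_of_gt hlam2
      have hn : (N : ℝ) - 1 ≠ 0 := by linarith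
      field_simp
    rw [e1, hXX, e2]
    ring
  -- assemble
  calc ∑ k : Fin n, ∑ i : Fin N,
        ((incidenceMat a b * (incidenceMat a b)ᵀ).mulVec (fun j => x j k) i) *
          (-((incidenceMat a b * (incidenceMat a b)ᵀ).mulVec (fun j => x j k) i) + v i k)
      = -(∑ k : Fin n, ∑ i,
            ((incidenceMat a b * (incidenceMat a b)ᵀ).mulVec (fun j => x j k) i) ^ 2)
        + ∑ k : Fin n, ∑ i, (v i k) *
            ((incidenceMat a b * (incidenceMat a b)ᵀ).mulVec (fun j => x j k) i) := by
        rw [Finset.sum_congr rfl fun k _ => hexp k, Finset.sum_add_distrib,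
          Finset.sum_neg_distrib]
    _ ≤ -(lam2 ^ 2 / (2 * ((N : ℝ) - 1)) * X2) + (Real.sqrt (N : ℝ) * opn * vmax) * X := by
        have hQsum : lam2 ^ 2 / (2 * ((N : ℝ) - 1)) * X2
            ≤ ∑ k : Fin n, ∑ i,
              ((incidenceMat a b * (incidenceMat a b)ᵀ).mulVec (fun j => x j k) i) ^ 2 := by
          rw [hX2, Finset.mul_sum]
          exact Finset.sum_le_sum fun k _ => hQ k
        have hCsum : ∑ k : Fin n, ∑ i, (v i k) *
              ((incidenceMat a b * (incidenceMat a b)ᵀ).mulVec (fun j => x j k) i)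
            ≤ (Real.sqrt (N : ℝ) * opn * vmax) * X := by
          rw [Finset.sum_congr rfl fun k _ => hcross_k k]
          exact hcross
        linarith
    _ = -(lam2 ^ 2 / (2 * ((N : ℝ) - 1))) * X *
        (X - (2 * Real.sqrt (N : ℝ) * ((N : ℝ) - 1) * opn / lam2 ^ 2) * vmax) := hRHS.symm
end

section
/- Let G be an undirected graph on N vertices with incidence matrix D(G) and Laplacian L(G) = D(G) D(G)^T. Let x, v ∈ ℝ^{Nn} with blocks x_i, v_i ∈ ℝⁿ and suppose ‖v_i‖ ≤ v_max for all i = 1,…,N. Then | ∑_{k=1}^{n} ⟨ c(x,k), L(G) c(v,k) ⟩ | ≤ √N ‖D(G)^T‖ ‖x̃‖ v_max, where c(·,k) is the k-th component vector and x̃ = D(G)^T x applied componentwise. -/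
open scoped BigOperators
open Matrix

lemma incT_mulVec {N m : ℕ} (a b : Fin m → Fin N) (e : Fin m) (hne : a e ≠ b e)
    (w : Fin N → ℝ) :
    (incidenceMat a b)ᵀ.mulVec w e = w (a e) - w (b e) := by
  simp only [incidenceMat, Matrix.mulVec, dotProduct, Matrix.transpose_apply,
    Matrix.of_apply]
  have h : ∀ i : Fin N, (if i = a e then (1:ℝ) else if i = b e then -1 else 0) * w i
      = (if i = a e then w i else 0) - (if i = b e then w i else 0) := by
    intro i
    by_cases h1 : i = a e
    · subst h1; simp [hne]
    · by_cases h2 : i = b e <;> simp [h1, h2, Ne.symm hne]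
  rw [Finset.sum_congr rfl fun i _ => h i, Finset.sum_sub_distrib,
    Finset.sum_ite_eq' _ (a e) w, Finset.sum_ite_eq' _ (b e) w]
  simp

lemma matOpNorm_nonneg {N m : ℕ} (A : Matrix (Fin N) (Fin m) ℝ) : 0 ≤ matOpNorm A :=
  norm_nonneg _

lemma mulVec_sq_le {N m : ℕ} (A : Matrix (Fin m) (Fin N) ℝ) (w : Fin N → ℝ) :
    ∑ e, (A.mulVec w e)^2 ≤ (matOpNorm A)^2 * ∑ i, (w i)^2 := by
  set W : EuclideanSpace ℝ (Fin N) := (WithLp.equiv 2 (Fin N → ℝ)).symm w with hW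
  have hle : ‖Matrix.toEuclideanLin A W‖ ≤ matOpNorm A * ‖W‖ := by
    have := (LinearMap.toContinuousLinearMap (Matrix.toEuclideanLin A)).le_opNorm W
    simpa [matOpNorm] using this
  have h1 : ‖Matrix.toEuclideanLin A W‖^2 = ∑ e, (A.mulVec w e)^2 := by
    rw [EuclideanSpace.norm_eq, Real.sq_sqrt (by positivity)]
    exact Finset.sum_congr rfl fun e _ => by rw [Real.norm_eq_abs, sq_abs]; rfl
  have h2 : ‖W‖^2 = ∑ i, (w i)^2 := by
    rw [EuclideanSpace.norm_eq, Real.sq_sqrt (by positivity)]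
    exact Finset.sum_congr rfl fun i _ => by rw [Real.norm_eq_abs, sq_abs]; rfl
  calc ∑ e, (A.mulVec w e)^2 = ‖Matrix.toEuclideanLin A W‖^2 := h1.symm
    _ ≤ (matOpNorm A * ‖W‖)^2 := by
        have h0 : 0 ≤ matOpNorm A * ‖W‖ := by
          have := matOpNorm_nonneg A; positivity
        apply sq_le_sq' _ hle
        linarith [norm_nonneg (Matrix.toEuclideanLin A W)]
    _ = (matOpNorm A)^2 * ∑ i, (w i)^2 := by rw [mul_pow, h2]

/-- bound on the input term.  For an undirected graph on `N`
vertices with incidence matrix `D` and Laplacian `L = D Dᵀ`, and stacked vectors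
`x, v ∈ ℝ^{Nn}` with `‖vᵢ‖ ≤ vmax`, one has
`|∑ₖ ⟨c(x,k), L c(v,k)⟩| ≤ √N ‖Dᵀ‖ ‖x̃‖ vmax`, where `c(·,k)` is the `k`-th
component vector and `x̃` is the stacked edge-difference vector. -/
theorem statement4
    (N m n : ℕ)
    (G : SimpleGraph (Fin N)) [DecidableRel G.Adj]
    (a b : Fin m → Fin N)
    (hab : ∀ e, G.Adj (a e) (b e))
    (huniq : ∀ u v : Fin N, G.Adj u v →
      ∃! e : Fin m, (a e = u ∧ b e = v) ∨ (a e = v ∧ b e = u))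
    (vmax : ℝ)
    (x v : Fin N → EuclideanSpace ℝ (Fin n))
    (hv : ∀ i, ‖v i‖ ≤ vmax) :
    |∑ k : Fin n, ∑ i : Fin N,
        x i k * ((incidenceMat a b * (incidenceMat a b)ᵀ).mulVec (fun j => v j k) i)| ≤
      Real.sqrt N * matOpNorm (incidenceMat a b)ᵀ *
        Real.sqrt (∑ e : Fin m, ‖x (a e) - x (b e)‖ ^ 2) * vmax := by
  rcases Nat.eq_zero_or_pos N with hN | hN
  · subst hN
    simp
  have hvmax : 0 ≤ vmax := le_trans (norm_nonneg _) (hv ⟨0, hN⟩)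
  set D := incidenceMat a b with hD
  have hne : ∀ e, a e ≠ b e := fun e => (hab e).ne
  -- rewrite LHS
  have key : ∀ k : Fin n, ∑ i : Fin N,
      x i k * ((D * Dᵀ).mulVec (fun j => v j k) i)
      = ∑ e : Fin m, (x (a e) k - x (b e) k) * (v (a e) k - v (b e) k) := by
    intro k
    have h1 : ∑ i : Fin N, x i k * ((D * Dᵀ).mulVec (fun j => v j k) i)
        = dotProduct (fun i => x i k) ((D * Dᵀ).mulVec (fun j => v j k)) := rfl
    rw [h1, ← Matrix.mulVec_mulVec, Matrix.dotProduct_mulVec, ← Matrix.mulVec_transpose]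
    exact Finset.sum_congr rfl fun e _ => by
      rw [incT_mulVec a b e (hne e), incT_mulVec a b e (hne e)]
  rw [Finset.sum_congr rfl fun k _ => key k, Finset.sum_comm]
  set S := ∑ e : Fin m, ∑ k : Fin n, (x (a e) k - x (b e) k) * (v (a e) k - v (b e) k)
    with hS
  set X := ∑ e : Fin m, ‖x (a e) - x (b e)‖^2 with hXdef
  have hX : ∑ e : Fin m, ∑ k : Fin n, (x (a e) k - x (b e) k)^2 = X := by
    refine Finset.sum_congr rfl fun e _ => ?_
    rw [EuclideanSpace.norm_eq, Real.sq_sqrt (by positivity)]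
    exact Finset.sum_congr rfl fun kk _ => by rw [Real.norm_eq_abs, sq_abs]; rfl
  set V := ∑ e : Fin m, ∑ k : Fin n, (v (a e) k - v (b e) k)^2 with hVdef
  have hX0 : 0 ≤ X := by rw [hXdef]; positivity
  have hV0 : 0 ≤ V := by rw [hVdef]; positivity
  -- Cauchy–Schwarz
  have cs : S^2 ≤ X * V := by
    rw [hS, hVdef, ← hX, ← Finset.sum_product', ← Finset.sum_product',
      ← Finset.sum_product']
    exact Finset.sum_mul_sq_le_sq_mul_sq Finset.univ
      (fun p : Fin m × Fin n => x (a p.1) p.2 - x (b p.1) p.2)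
      (fun p : Fin m × Fin n => v (a p.1) p.2 - v (b p.1) p.2)
  -- bound V
  have hVle : V ≤ (matOpNorm Dᵀ)^2 * (N * vmax^2) := by
    have h1 : V = ∑ k : Fin n, ∑ e : Fin m, (Dᵀ.mulVec (fun j => v j k) e)^2 := by
      rw [hVdef, Finset.sum_comm]
      exact Finset.sum_congr rfl fun k _ => Finset.sum_congr rfl fun e _ => by
        rw [hD, incT_mulVec a b e (hne e)]
    have h2 : ∀ k : Fin n, ∑ e : Fin m, (Dᵀ.mulVec (fun j => v j k) e)^2
        ≤ (matOpNorm Dᵀ)^2 * ∑ i : Fin N, (v i k)^2 :=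
      fun k => mulVec_sq_le Dᵀ (fun j => v j k)
    have h3 : ∑ k : Fin n, ∑ i : Fin N, (v i k)^2 ≤ N * vmax^2 := by
      rw [Finset.sum_comm]
      calc ∑ i : Fin N, ∑ k : Fin n, (v i k)^2 = ∑ i : Fin N, ‖v i‖^2 := by
            refine Finset.sum_congr rfl fun i _ => ?_
            rw [EuclideanSpace.norm_eq, Real.sq_sqrt (by positivity)]
            exact Finset.sum_congr rfl fun k _ => by rw [Real.norm_eq_abs, sq_abs]
        _ ≤ ∑ _i : Fin N, vmax^2 := Finset.sum_le_sum fun i _ =>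
            pow_le_pow_left₀ (norm_nonneg _) (hv i) 2
        _ = N * vmax^2 := by rw [Finset.sum_const]; simp [mul_comm]
    calc V ≤ ∑ k : Fin n, (matOpNorm Dᵀ)^2 * ∑ i : Fin N, (v i k)^2 := by
          rw [h1]; exact Finset.sum_le_sum fun k _ => h2 k
      _ = (matOpNorm Dᵀ)^2 * ∑ k : Fin n, ∑ i : Fin N, (v i k)^2 := by
          rw [Finset.mul_sum]
      _ ≤ (matOpNorm Dᵀ)^2 * (N * vmax^2) := by
          apply mul_le_mul_of_nonneg_left h3
          exact sq_nonneg _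
  -- assemble
  have habs : |S| ≤ Real.sqrt X * Real.sqrt V := by
    rw [← Real.sqrt_sq_eq_abs, ← Real.sqrt_mul hX0]
    exact Real.sqrt_le_sqrt cs
  have hVs : Real.sqrt V ≤ matOpNorm Dᵀ * (Real.sqrt N * vmax) := by
    have : Real.sqrt V ≤ Real.sqrt ((matOpNorm Dᵀ)^2 * (N * vmax^2)) :=
      Real.sqrt_le_sqrt hVle
    refine this.trans (le_of_eq ?_)
    rw [Real.sqrt_mul (sq_nonneg _), Real.sqrt_mul (Nat.cast_nonneg N),
      Real.sqrt_sq (matOpNorm_nonneg _), Real.sqrt_sq hvmax]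
  calc |S| ≤ Real.sqrt X * Real.sqrt V := habs
    _ ≤ Real.sqrt X * (matOpNorm Dᵀ * (Real.sqrt N * vmax)) :=
        mul_le_mul_of_nonneg_left hVs (Real.sqrt_nonneg _)
    _ = Real.sqrt N * matOpNorm Dᵀ * Real.sqrt X * vmax := by ring
end
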